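/- Let θ : [0, ∞) → ℝ be differentiable at 0 with θ(0) = 1, and for r ≥ 0 let s(r) be the unique s ∈ [−1, ∞) with s·e^s = e^{θ(r)}. Then (s(r) − θ(r))/r → −θ'(0)/2 as r → 0⁺; consequently, for any ν > 0, the function 𝓔(r) := −(s(r) − θ(r))²/(ν r²) tends to the finite limit −θ'(0)²/(4ν) as r → 0⁺. -/

import Mathlib

open Filter

/-- if θ is differentiable (from the right) at 0 with θ(0) = 1 and derivative θ',
and s(r) = W(e^{θ(r)}) is the unique s ∈ [−1, ∞) with s·e^s = e^{θ(r)}, then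
(s(r) − θ(r))/r → −θ'/2 as r → 0⁺, and for every ν > 0 the effective potential
𝓔(r) = −(s(r) − θ(r))²/(νr²) tends to the finite limit −θ'²/(4ν) as r → 0⁺. -/
theorem stmt7 (θ : ℝ → ℝ) (θ' : ℝ) (hθdiff : HasDerivWithinAt θ θ' (Set.Ici 0) 0)
    (hθ0 : θ 0 = 1)
    (s : ℝ → ℝ) (hs1 : ∀ r ∈ Set.Ici (0 : ℝ), -1 ≤ s r)
    (hs2 : ∀ r ∈ Set.Ici (0 : ℝ), s r * Real.exp (s r) = Real.exp (θ r)) :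
    Tendsto (fun r => (s r - θ r) / r) (nhdsWithin 0 (Set.Ioi 0)) (nhds (-θ' / 2)) ∧
    (∀ ν : ℝ, 0 < ν →
      Tendsto (fun r => -(s r - θ r) ^ 2 / (ν * r ^ 2)) (nhdsWithin 0 (Set.Ioi 0))
        (nhds (-θ' ^ 2 / (4 * ν)))) := by
  classical
  set φ : ℝ → ℝ := fun x => x * Real.exp x with hφdef
  have hφ : HasStrictDerivAt φ (2 * Real.exp 1) 1 := by
    have h := (hasStrictDerivAt_id (1:ℝ)).mul (Real.hasStrictDerivAt_exp 1)
    refine h.congr_deriv ?_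
    simp only [id_eq, id, one_mul, mul_one]
    ring
  have hφ' : (2 : ℝ) * Real.exp 1 ≠ 0 := by positivity
  have hφ1 : φ 1 = Real.exp 1 := by simp [hφdef]
  set F := hφ.hasStrictFDerivAt_equiv hφ' with hFdef
  set g : ℝ → ℝ := F.localInverse φ _ 1 with hgdef
  have hg : HasStrictDerivAt g (2 * Real.exp 1)⁻¹ (φ 1) := hφ.to_localInverse hφ'
  have hleft : ∀ᶠ x in nhds (1:ℝ), g (φ x) = x := F.eventually_left_inverse
  have hright : ∀ᶠ y in nhds (φ 1), φ (g y) = y := F.eventually_right_inverse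
  have hg1 : g (φ 1) = 1 := F.localInverse_apply_image
  have hgcont : ContinuousAt g (φ 1) := F.localInverse_continuousAt
  -- strict mono of φ on [-1, ∞)
  have hmono : StrictMonoOn φ (Set.Ici (-1 : ℝ)) := by
    apply strictMonoOn_of_deriv_pos (convex_Ici _)
    · exact (continuous_id.mul Real.continuous_exp).continuousOn
    · intro x hx
      rw [interior_Ici] at hx
      have hd : HasDerivAt φ ((1 + x) * Real.exp x) x := by
        have h := (hasDerivAt_id x).mul (Real.hasDerivAt_exp x)
        refine h.congr_deriv ?_
        simp only [id_eq, id, one_mul, mul_one]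
        ring
      rw [hd.deriv]
      have : (0:ℝ) < 1 + x := by linarith [hx.out]
      positivity
  -- θ tends to 1 within Ici 0
  have hθt : Tendsto θ (nhdsWithin 0 (Set.Ici 0)) (nhds 1) := by
    have := hθdiff.continuousWithinAt
    rwa [ContinuousWithinAt, hθ0] at this
  have hexpt : Tendsto (fun r => Real.exp (θ r)) (nhdsWithin 0 (Set.Ici 0)) (nhds (φ 1)) := by
    rw [hφ1]
    exact (Real.continuous_exp.continuousAt.tendsto).comp hθt
  -- eventually g (exp (θ r)) is close to 1, in particular ≥ -1
  have hgnear : ∀ᶠ r in nhdsWithin 0 (Set.Ici 0), -1 ≤ g (Real.exp (θ r)) := by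
    have h1 : ∀ᶠ y in nhds (φ 1), -1 ≤ g y := by
      have := hgcont.eventually_mem (Ioi_mem_nhds (by rw [hg1]; norm_num : (-1:ℝ) < g (φ 1)))
      filter_upwards [this] with y hy using le_of_lt hy
    exact hexpt.eventually h1
  have hrinv : ∀ᶠ r in nhdsWithin 0 (Set.Ici 0), φ (g (Real.exp (θ r))) = Real.exp (θ r) :=
    hexpt.eventually hright
  -- key: eventually s r = g (exp (θ r))
  have hkey : ∀ᶠ r in nhdsWithin 0 (Set.Ici 0), s r = g (Real.exp (θ r)) := by
    filter_upwards [hgnear, hrinv, self_mem_nhdsWithin] with r h1 h2 hr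
    have hsr : φ (s r) = Real.exp (θ r) := hs2 r hr
    exact hmono.injOn (hs1 r hr) h1 (by rw [hsr, h2])
  -- derivative of h r = g (exp (θ r)) - θ r within Ici 0 at 0
  have hexp' : HasDerivWithinAt (fun r => Real.exp (θ r)) (Real.exp (θ 0) * θ')
      (Set.Ici 0) 0 := (Real.hasDerivAt_exp (θ 0)).comp_hasDerivWithinAt 0 hθdiff
  have hgd : HasDerivAt g (2 * Real.exp 1)⁻¹ (Real.exp (θ 0)) := by
    have e : Real.exp (θ 0) = φ 1 := by rw [hθ0, hφ1]
    rw [e]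
    exact hg.hasDerivAt
  have hcomp : HasDerivWithinAt (fun r => g (Real.exp (θ r)))
      ((2 * Real.exp 1)⁻¹ * (Real.exp (θ 0) * θ')) (Set.Ici 0) 0 :=
    hgd.comp_hasDerivWithinAt 0 hexp'
  have hh : HasDerivWithinAt (fun r => g (Real.exp (θ r)) - θ r) (-θ' / 2) (Set.Ici 0) 0 := by
    have h := hcomp.sub hθdiff
    refine h.congr_deriv ?_
    rw [hθ0]
    field_simp
    ring
  have hh0 : g (Real.exp (θ 0)) - θ 0 = 0 := by
    have e : Real.exp (θ 0) = φ 1 := by rw [hθ0, hφ1]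
    rw [e, hg1, hθ0]
    norm_num
  -- slope limit
  rw [hasDerivWithinAt_iff_tendsto_slope] at hh
  have hsub : Set.Ioi (0:ℝ) ⊆ Set.Ici 0 \ {0} := fun x hx =>
    ⟨Set.mem_Ici.mpr (le_of_lt (Set.mem_Ioi.mp hx)),
      Set.notMem_singleton_iff.mpr (ne_of_gt (Set.mem_Ioi.mp hx))⟩
  have hslope : Tendsto (fun r => (g (Real.exp (θ r)) - θ r) / r)
      (nhdsWithin 0 (Set.Ioi 0)) (nhds (-θ' / 2)) := by
    have h := hh.mono_left (nhdsWithin_mono _ hsub)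
    refine h.congr' ?_
    filter_upwards [self_mem_nhdsWithin] with r hr
    show slope (fun r => g (Real.exp (θ r)) - θ r) 0 r = _
    rw [slope_def_field]
    simp [hh0]
  have hkey' : ∀ᶠ r in nhdsWithin 0 (Set.Ioi 0), s r = g (Real.exp (θ r)) :=
    hkey.filter_mono (nhdsWithin_mono _ Set.Ioi_subset_Ici_self)
  have main : Tendsto (fun r => (s r - θ r) / r) (nhdsWithin 0 (Set.Ioi 0))
      (nhds (-θ' / 2)) := by
    refine hslope.congr' ?_
    filter_upwards [hkey'] with r hr
    rw [hr]
  refine ⟨main, fun ν hν => ?_⟩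
  have h2 : Tendsto (fun r => -((s r - θ r) / r) ^ 2 / ν) (nhdsWithin 0 (Set.Ioi 0))
      (nhds (-(-θ' / 2) ^ 2 / ν)) := ((main.pow 2).neg).div_const ν
  have heq : -(-θ' / 2) ^ 2 / ν = -θ' ^ 2 / (4 * ν) := by
    rw [div_eq_div_iff hν.ne' (by positivity : (4:ℝ) * ν ≠ 0)]
    ring
  rw [heq] at h2
  refine h2.congr' ?_
  filter_upwards [self_mem_nhdsWithin] with r hr
  have hr0 : r ≠ 0 := ne_of_gt hr
  rw [div_pow]; ring
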